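/- Let Q be a symmetric bilinear form on a real vector space V satisfying the Hodge index property with respect to L (Q(L,L) > 0 and Q ≤ 0 on L^⊥). If L = A + B, then Q(A,B) ≥ Q(A,L) · Q(B,L) / Q(L,L). -/

import Mathlib

/-- If `L = A + B` and `Q` satisfies the Hodge index property w.r.t. `L`,
then `Q(A,B) ≥ Q(A,L)·Q(B,L)/Q(L,L)`. -/
theorem hodge_index_product_bound (V : Type*) [AddCommGroup V] [Module ℝ V]
    (Q : V →ₗ[ℝ] V →ₗ[ℝ] ℝ) (hsymm : ∀ x y, Q x y = Q y x)
    (L : V) (hL : 0 < Q L L)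
    (hneg : ∀ v, Q L v = 0 → Q v v ≤ 0)
    (A B : V) (hAB : A + B = L) :
    Q A L * Q B L / Q L L ≤ Q A B := by
  set c : ℝ := Q A L / Q L L with hc
  set v : V := A - c • L with hv
  have hLne : Q L L ≠ 0 := ne_of_gt hL
  have hLv : Q L v = 0 := by
    simp only [hv, map_sub, map_smul, smul_eq_mul, hc]
    rw [hsymm L A]
    field_simp
    ring
  have hvv := hneg v hLv
  have hexp : Q v v = Q A A - Q A L * Q A L / Q L L := by
    simp only [hv, map_sub, map_smul, LinearMap.sub_apply, LinearMap.smul_apply,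
      smul_eq_mul, hc, hsymm L A]
    field_simp
    ring
  have hAA : Q A A ≤ Q A L * Q A L / Q L L := by linarith [hexp ▸ hvv]
  have hABL : Q A B = Q A L - Q A A := by
    have : Q A L = Q A A + Q A B := by rw [← hAB]; simp
    linarith
  have hBL : Q B L = Q L L - Q A L := by
    have h2 : Q (A + B) L = Q A L + Q B L := by simp
    rw [hAB] at h2
    linarith
  rw [hABL, hBL]
  rw [le_div_iff₀ hL] at hAA
  rw [div_le_iff₀ hL]
  nlinarith [hAA]
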